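/- Let V have dimension 2n, let U have dimension p with p ≤ n, let α : V × V → U be a symmetric bilinear map, and let β(X,Y) = (α(X,Y)+α(JX,JY), α(X,JY)-α(JX,Y)). If β is flat with respect to the signature-(p,p) bilinear form on U × U, then the nullity ν(β) = dim{Y ∈ V : β(X,Y)=0 for all X} equals 2n - r₀, where r₀ = max{dim B_Z(V) : Z ∈ V} and B_Z Y = β(Z,Y). In particular, ν(β) ≥ 2n - dim S(β), where S(β) = span{β(X,Y) : X,Y ∈ V}. -/

import Mathlib

open Module RealInnerProductSpace

section helpers
open Finset Matrix
variable {U : Type*} [NormedAddCommGroup U] [InnerProductSpace ℝ U]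

noncomputable def HH (w w' : U × U) : ℝ := ⟪w.1, w'.1⟫ + ⟪w.2, w'.2⟫

lemma HH_self_eq_zero {w : U × U} (h : HH w w = 0) : w = 0 := by
  have h1 : (0:ℝ) ≤ ⟪w.1, w.1⟫ := real_inner_self_nonneg
  have h2 : (0:ℝ) ≤ ⟪w.2, w.2⟫ := real_inner_self_nonneg
  have e1 : ⟪w.1, w.1⟫ = 0 := by unfold HH at h; linarith
  have e2 : ⟪w.2, w.2⟫ = 0 := by unfold HH at h; linarith
  have : w.1 = 0 := by rwa [real_inner_self_eq_norm_sq, pow_eq_zero_iff, norm_eq_zero] at e1; norm_num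
  have h2' : w.2 = 0 := by rwa [real_inner_self_eq_norm_sq, pow_eq_zero_iff, norm_eq_zero] at e2; norm_num
  exact Prod.ext this h2'

lemma HH_sum_left {m : ℕ} (c : Fin m → ℝ) (v : Fin m → U × U) (w : U × U) :
    HH (∑ i, c i • v i) w = ∑ i, c i * HH (v i) w := by
  simp [HH, Prod.fst_sum, Prod.snd_sum, sum_inner, inner_smul_left, mul_add, Finset.sum_add_distrib]

lemma HH_sum_right {m : ℕ} (c : Fin m → ℝ) (v : Fin m → U × U) (w : U × U) :
    HH w (∑ i, c i • v i) = ∑ i, c i * HH w (v i) := by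
  simp [HH, Prod.fst_sum, Prod.snd_sum, inner_sum, inner_smul_right, mul_add, Finset.sum_add_distrib]

lemma gram_det_ne_zero_iff {m : ℕ} (v : Fin m → U × U) :
    (Matrix.of fun i j => HH (v i) (v j)).det ≠ 0 ↔ LinearIndependent ℝ v := by
  constructor
  · intro hdet
    rw [Fintype.linearIndependent_iff]
    intro c hc i
    have hmv : (Matrix.of fun i j => HH (v i) (v j)) *ᵥ c = 0 := by
      funext j
      simp only [Matrix.mulVec, dotProduct, Matrix.of_apply, Pi.zero_apply]
      have h2 := HH_sum_right c v (v j)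
      rw [hc] at h2
      simp only [HH, inner_zero_right, Prod.fst_zero, Prod.snd_zero, add_zero] at h2
      calc ∑ x, HH (v j) (v x) * c x
          = ∑ x, c x * (⟪(v j).1, (v x).1⟫ + ⟪(v j).2, (v x).2⟫) := by
            apply Finset.sum_congr rfl; intro x _; simp [HH]; ring
        _ = 0 := h2.symm
    have := Matrix.eq_zero_of_mulVec_eq_zero hdet hmv
    exact congrFun this i
  · intro hli hdet
    obtain ⟨c, hcne, hc0⟩ := (Matrix.exists_mulVec_eq_zero_iff).2 hdet
    have key : (∑ i, c i • v i) = 0 := by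
      apply HH_self_eq_zero
      rw [HH_sum_left]
      have : ∀ i, HH (v i) (∑ j, c j • v j) = 0 := by
        intro i
        rw [HH_sum_right]
        have := congrFun hc0 i
        simp only [Matrix.mulVec, dotProduct, Matrix.of_apply, Pi.zero_apply] at this
        rw [← this]; apply Finset.sum_congr rfl; intro x _; ring
      simp [this]
    have := Fintype.linearIndependent_iff.1 hli c key
    exact hcne (funext this)


variable {V : Type*} [AddCommGroup V] [Module ℝ V]

lemma pert [FiniteDimensional ℝ U] (β : V →ₗ[ℝ] V →ₗ[ℝ] (U × U)) (r₀ : ℕ)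
    (hmax : ∀ Z : V, finrank ℝ ↥(LinearMap.range (β Z)) ≤ r₀)
    (Z₀ : V) (hZ₀ : finrank ℝ ↥(LinearMap.range (β Z₀)) = r₀)
    (X Y₀ : V) (hY₀ : β Z₀ Y₀ = 0) :
    β X Y₀ ∈ LinearMap.range (β Z₀) := by
  by_contra hnot
  have b : Basis (Fin r₀) ℝ ↥(LinearMap.range (β Z₀)) := finBasisOfFinrankEq ℝ _ hZ₀
  choose y hy using fun i => LinearMap.mem_range.1 (b i).2
  set w0 : Fin r₀ → U × U := fun i => β Z₀ (y i) with hw0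
  have hw0b : w0 = (Submodule.subtype _) ∘ b := by
    funext i; simp [hw0, hy i]
  have li0 : LinearIndependent ℝ w0 := by
    rw [hw0b]
    exact b.linearIndependent.map' _ (Submodule.ker_subtype _)
  have span0 : Submodule.span ℝ (Set.range w0) = LinearMap.range (β Z₀) := by
    rw [hw0b, Set.range_comp, ← Submodule.map_span, b.span_eq, Submodule.map_top,
      Submodule.range_subtype]
  -- the moving family
  set v : ℝ → Fin (r₀ + 1) → U × U :=
    fun t => Fin.snoc (fun i => β Z₀ (y i) + t • β X (y i)) (β X Y₀) with hv
  have hv0 : v 0 = Fin.snoc w0 (β X Y₀) := by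
    funext i; simp [hv, hw0]
  have li_at_0 : LinearIndependent ℝ (v 0) := by
    rw [hv0, linearIndependent_fin_snoc]
    exact ⟨li0, by rw [span0]; exact hnot⟩
  set f : ℝ → ℝ := fun t => (Matrix.of fun i j => HH (v t i) (v t j)).det with hf
  have hvc : ∀ i, Continuous fun t => v t i := by
    intro i
    induction i using Fin.lastCases with
    | last => simp only [hv, Fin.snoc_last]; exact continuous_const
    | cast k =>
      simp only [hv, Fin.snoc_castSucc]
      exact continuous_const.add (continuous_id.smul continuous_const)
  have hfc : Continuous f := by
    apply Continuous.matrix_det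
    apply continuous_matrix
    intro i j
    simp only [Matrix.of_apply, HH]
    exact ((hvc i).fst.inner (hvc j).fst).add ((hvc i).snd.inner (hvc j).snd)
  have hf0 : f 0 ≠ 0 := (gram_det_ne_zero_iff (v 0)).2 li_at_0
  have hev : ∀ᶠ t in nhds 0, f t ≠ 0 := hfc.continuousAt.eventually_ne hf0
  obtain ⟨t, htf, ht0⟩ : ∃ t : ℝ, f t ≠ 0 ∧ t ≠ 0 := by
    have h2 : ∀ᶠ t in nhdsWithin (0:ℝ) {(0:ℝ)}ᶜ, f t ≠ 0 ∧ t ≠ 0 :=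
      (hev.filter_mono nhdsWithin_le_nhds).and self_mem_nhdsWithin
    exact h2.exists
  have li_t : LinearIndependent ℝ (v t) := (gram_det_ne_zero_iff (v t)).1 htf
  have hmem : ∀ i, v t i ∈ LinearMap.range (β (Z₀ + t • X)) := by
    intro i
    induction i using Fin.lastCases with
    | last =>
      simp only [hv, Fin.snoc_last]
      have hval : β (Z₀ + t • X) Y₀ = t • β X Y₀ := by
        simp [map_add, _root_.map_smul, hY₀]
      refine ⟨t⁻¹ • Y₀, ?_⟩
      rw [_root_.map_smul, hval, smul_smul, inv_mul_cancel₀ ht0, one_smul]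
    | cast k =>
      simp only [hv, Fin.snoc_castSucc]
      exact ⟨y k, by simp [map_add, _root_.map_smul]⟩
  set v' : Fin (r₀ + 1) → ↥(LinearMap.range (β (Z₀ + t • X))) :=
    fun i => ⟨v t i, hmem i⟩ with hv'
  have li' : LinearIndependent ℝ v' := by
    apply LinearIndependent.of_comp (Submodule.subtype _)
    convert li_t
    funext i; rfl
  have hcard := li'.fintype_card_le_finrank
  rw [Fintype.card_fin] at hcard
  have := hmax (Z₀ + t • X)
  omega
end helpers

theorem stmt_9
    {V U : Type*} [AddCommGroup V] [Module ℝ V] [FiniteDimensional ℝ V]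
    [NormedAddCommGroup U] [InnerProductSpace ℝ U] [FiniteDimensional ℝ U]
    (n p : ℕ) (hpn : p ≤ n) (hV : finrank ℝ V = 2 * n) (hU : finrank ℝ U = p)
    (J : V →ₗ[ℝ] V) (hJ : ∀ v : V, J (J v) = -v)
    (α : V →ₗ[ℝ] V →ₗ[ℝ] U) (hα : ∀ X Y : V, α X Y = α Y X)
    (β : V →ₗ[ℝ] V →ₗ[ℝ] (U × U))
    (hβ : ∀ X Y : V, β X Y = (α X Y + α (J X) (J Y), α X (J Y) - α (J X) Y))
    (hflat : ∀ X Y Z T : V,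
      ⟪(β X Y).1, (β Z T).1⟫ - ⟪(β X Y).2, (β Z T).2⟫ =
        ⟪(β X T).1, (β Z Y).1⟫ - ⟪(β X T).2, (β Z Y).2⟫) :
    (∀ r₀ : ℕ,
      ((∃ Z : V, finrank ℝ ↥(LinearMap.range (β Z)) = r₀) ∧
        ∀ Z : V, finrank ℝ ↥(LinearMap.range (β Z)) ≤ r₀) →
      finrank ℝ ↥(⨅ X : V, LinearMap.ker (β X)) = 2 * n - r₀) ∧
    2 * n - finrank ℝ ↥(Submodule.span ℝ {w : U × U | ∃ X Y : V, β X Y = w}) ≤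
      finrank ℝ ↥(⨅ X : V, LinearMap.ker (β X)) := by
  -- symmetry of first component, antisymmetry of second
  have hb1 : ∀ X Y : V, (β X Y).1 = (β Y X).1 := by
    intro X Y
    simp only [hβ]
    rw [hα X Y, hα (J X) (J Y)]
  have hb2 : ∀ X Y : V, (β X Y).2 = -(β Y X).2 := by
    intro X Y
    simp only [hβ]
    rw [hα X (J Y), hα (J X) Y]
    abel
  -- the "Hermitian flatness" identity w.r.t. the positive definite form HH
  have hstar : ∀ X Y T Z : V, HH (β X Y) (β T Z) = HH (β X T) (β Y Z) := by
    intro X Y T Z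
    simp only [HH]
    rw [hb1 T Z, hb2 T Z, hb1 Y Z, hb2 Y Z, inner_neg_right, inner_neg_right]
    linarith [hflat X Y Z T]
  -- main claim
  have main : ∀ r₀ : ℕ,
      ((∃ Z : V, finrank ℝ ↥(LinearMap.range (β Z)) = r₀) ∧
        ∀ Z : V, finrank ℝ ↥(LinearMap.range (β Z)) ≤ r₀) →
      finrank ℝ ↥(⨅ X : V, LinearMap.ker (β X)) = 2 * n - r₀ := by
    rintro r₀ ⟨⟨Z₀, hZ₀⟩, hmax⟩
    have hker : (⨅ X : V, LinearMap.ker (β X)) = LinearMap.ker (β Z₀) := by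
      apply le_antisymm (iInf_le _ Z₀)
      intro Y₀ hY₀
      rw [LinearMap.mem_ker] at hY₀
      rw [Submodule.mem_iInf]
      intro X
      rw [LinearMap.mem_ker]
      -- β Y₀ Z₀ = 0
      have hYZ : β Y₀ Z₀ = 0 := by
        apply Prod.ext
        · rw [hb1 Y₀ Z₀, hY₀]
        · rw [hb2 Y₀ Z₀, hY₀]; simp
      -- second component of β Y₀ Y₀ vanishes
      have h20 : (β Y₀ Y₀).2 = 0 := by
        have hself := hb2 Y₀ Y₀
        have h2 : (2:ℝ) • (β Y₀ Y₀).2 = 0 := by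
          rw [two_smul]; nth_rewrite 2 [hself]; simp
        exact (smul_eq_zero.mp h2).resolve_left (by norm_num)
      -- β Y₀ Y₀ is HH-orthogonal to range (β Z₀)
      have horth : ∀ w ∈ LinearMap.range (β Z₀), HH (β Y₀ Y₀) w = 0 := by
        rintro w ⟨T, rfl⟩
        calc HH (β Y₀ Y₀) (β Z₀ T) = ⟪(β Y₀ Y₀).1, (β Z₀ T).1⟫ := by
              simp [HH, h20]
          _ = ⟪(β Y₀ Y₀).1, (β T Z₀).1⟫ := by rw [hb1 Z₀ T]
          _ = HH (β Y₀ Y₀) (β T Z₀) := by simp [HH, h20]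
          _ = HH (β Y₀ T) (β Y₀ Z₀) := hstar Y₀ Y₀ T Z₀
          _ = 0 := by rw [hYZ]; simp [HH]
      have hw : β Y₀ Y₀ ∈ LinearMap.range (β Z₀) := pert β r₀ hmax Z₀ hZ₀ Y₀ Y₀ hY₀
      have hww : β Y₀ Y₀ = 0 := HH_self_eq_zero (horth _ hw)
      apply HH_self_eq_zero
      calc HH (β X Y₀) (β X Y₀) = HH (β X X) (β Y₀ Y₀) := hstar X Y₀ X Y₀
        _ = 0 := by rw [hww]; simp [HH]
    rw [hker]
    have hrn := LinearMap.finrank_range_add_finrank_ker (β Z₀)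
    rw [hZ₀, hV] at hrn
    omega
  refine ⟨main, ?_⟩
  -- construct the maximal rank r₀
  set g : V → ℕ := fun Z => finrank ℝ ↥(LinearMap.range (β Z)) with hg
  have hbdd : ∀ Z, g Z ≤ finrank ℝ (U × U) := fun Z => (LinearMap.range (β Z)).finrank_le
  have hbdd' : BddAbove (Set.range g) := ⟨finrank ℝ (U × U), by rintro _ ⟨Z, rfl⟩; exact hbdd Z⟩
  set r₀ : ℕ := sSup (Set.range g) with hr₀
  have hmem : r₀ ∈ Set.range g := Nat.sSup_mem ⟨g 0, ⟨0, rfl⟩⟩ hbdd'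
  obtain ⟨Z₀, hZ₀⟩ := hmem
  have hub : ∀ Z, g Z ≤ r₀ := fun Z => le_csSup hbdd' ⟨Z, rfl⟩
  have h1 := main r₀ ⟨⟨Z₀, hZ₀⟩, hub⟩
  rw [h1]
  apply Nat.sub_le_sub_left
  rw [← hZ₀]
  apply Submodule.finrank_mono
  rintro w ⟨Y, rfl⟩
  exact Submodule.subset_span ⟨Z₀, Y, rfl⟩
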